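/- Let $M$ be an $r \times r$ nonnegative integer matrix with largest positive real eigenvalue $d$ which is a simple root of the characteristic polynomial $\chi$, and suppose all eigenvalues $\lambda$ satisfy $|\lambda| \le d$. Let $Q(z) = \chi(z)/(z-d)$, and suppose $Q(d) \ge N$ for some real $N > 0$. Let $s$ be the number of non-real eigenvalues of $M$ with positive imaginary part (with multiplicity). Then $d \ge N^{1/(r-1)} \left(1 - \frac{s+1}{r}\right)^{1 - \frac{s}{r-1}}$. -/

import Mathlib

open Polynomial


private lemma msum_re (R : Multiset ℂ) : (R.map Complex.re).sum = R.sum.re := by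
  induction R using Multiset.induction_on with
  | empty => simp
  | cons a s ih => simp [ih]

private lemma mprod_nonneg (s : Multiset ℝ) (h : ∀ a ∈ s, 0 ≤ a) : 0 ≤ s.prod := by
  induction s using Multiset.induction_on with
  | empty => simp
  | cons a s ih =>
    simp only [Multiset.prod_cons]
    exact mul_nonneg (h a (Multiset.mem_cons_self a s))
      (ih fun b hb => h b (Multiset.mem_cons_of_mem hb))

private lemma mprod_le_mprod {α : Type*} (s : Multiset α) (f g : α → ℝ)
    (h0 : ∀ a ∈ s, 0 ≤ f a) (h1 : ∀ a ∈ s, f a ≤ g a) :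
    (s.map f).prod ≤ (s.map g).prod := by
  induction s using Multiset.induction_on with
  | empty => simp
  | cons a s ih =>
    simp only [Multiset.map_cons, Multiset.prod_cons]
    have hf0 : 0 ≤ (s.map f).prod := by
      refine mprod_nonneg _ fun b hb => ?_
      obtain ⟨c, hc, rfl⟩ := Multiset.mem_map.mp hb
      exact h0 c (Multiset.mem_cons_of_mem hc)
    exact mul_le_mul (h1 a (Multiset.mem_cons_self a s))
      (ih (fun b hb => h0 b (Multiset.mem_cons_of_mem hb))
          (fun b hb => h1 b (Multiset.mem_cons_of_mem hb)))
      hf0 (le_trans (h0 a (Multiset.mem_cons_self a s)) (h1 a (Multiset.mem_cons_self a s)))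

private lemma msum_lin (s : Multiset ℂ) (c e : ℝ) :
    (s.map (fun a => c - e * a.re)).sum = (Multiset.card s) * c - e * (s.map Complex.re).sum := by
  induction s using Multiset.induction_on with
  | empty => simp
  | cons a s ih => simp [ih]; ring

private lemma mprod_map_const_mul (s : Multiset ℂ) (c : ℝ) (g : ℂ → ℝ) :
    (s.map (fun a => c * g a)).prod = c ^ (Multiset.card s) * (s.map g).prod := by
  induction s using Multiset.induction_on with
  | empty => simp
  | cons a s ih => simp [ih]; ring

private lemma multiset_amgm (T : Multiset ℝ) (h0 : ∀ t ∈ T, 0 ≤ t) (hc : Multiset.card T ≠ 0) :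
    T.prod ≤ (T.sum / (Multiset.card T : ℝ)) ^ (Multiset.card T) := by
  set l := T.toList with hl
  have hlen : l.length = Multiset.card T := Multiset.length_toList T
  have hsum : l.sum = T.sum := Multiset.sum_toList T
  have hprod : l.prod = T.prod := Multiset.prod_toList T
  set n := l.length with hn
  have hn0 : n ≠ 0 := by rw [hlen]; exact hc
  have hnonneg : ∀ i : Fin n, 0 ≤ l.get i := by
    intro i
    exact h0 _ (Multiset.mem_toList.mp (l.get_mem i))
  have hprodeq : (∏ i : Fin n, l.get i) = l.prod := by
    conv_rhs => rw [← List.ofFn_get l]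
    rw [List.prod_ofFn]
  have hsumeq : (∑ i : Fin n, l.get i) = l.sum := by
    conv_rhs => rw [← List.ofFn_get l]
    rw [List.sum_ofFn]
  have key := Real.geom_mean_le_arith_mean_weighted (Finset.univ : Finset (Fin n))
    (fun _ => (n : ℝ)⁻¹) (fun i => l.get i)
    (fun i _ => by positivity)
    (by rw [Finset.sum_const, Finset.card_univ, Fintype.card_fin, nsmul_eq_mul,
      mul_inv_cancel₀ (by exact_mod_cast hn0)])
    (fun i _ => hnonneg i)
  rw [Real.finset_prod_rpow _ _ (fun i _ => hnonneg i) _] at key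
  have hsum' : ∑ i : Fin n, (n:ℝ)⁻¹ * l.get i = l.sum / n := by
    rw [← Finset.mul_sum, hsumeq]; field_simp
  rw [hsum', hprodeq] at key
  -- key : l.prod ^ (n:ℝ)⁻¹ ≤ l.sum / n
  have hp0 : (0:ℝ) ≤ l.prod := by
    rw [hprod]; exact mprod_nonneg T h0
  have key2 := Real.rpow_le_rpow (Real.rpow_nonneg hp0 _) key (Nat.cast_nonneg n)
  rw [← Real.rpow_mul hp0, inv_mul_cancel₀ (by exact_mod_cast hn0), Real.rpow_one] at key2
  calc T.prod = l.prod := hprod.symm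
    _ ≤ (l.sum / n) ^ (n : ℕ) := by
        rw [← Real.rpow_natCast (l.sum / n) n]; exact key2
    _ = (T.sum / (Multiset.card T : ℝ)) ^ (Multiset.card T) := by
        rw [hsum, hlen]

set_option maxHeartbeats 1000000 in
/-- Analytic core of the lower bound for the FP-dimension of a `ℤ₊`-generator:
if `M` is an `r × r` nonnegative integer matrix whose characteristic polynomial factors
as `(X - d) * Q` with `d > 0` a simple root dominating all eigenvalues in absolute value,
`Q(d) ≥ N > 0`, and `s` is the number of eigenvalues with positive imaginary part
(with multiplicity), then `d ≥ N^(1/(r-1)) * (1 - (s+1)/r)^(1 - s/(r-1))`. -/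
theorem stmt2 (r : ℕ) (hr : 2 ≤ r) (M : Matrix (Fin r) (Fin r) ℤ)
    (hM : ∀ i j, 0 ≤ M i j) (d N : ℝ) (hd : 0 < d) (hN : 0 < N)
    (Q : Polynomial ℂ)
    (hfac : (M.map ((↑) : ℤ → ℂ)).charpoly = (X - C (d : ℂ)) * Q)
    (hsimple : Q.eval (d : ℂ) ≠ 0)
    (hmax : ∀ z ∈ (M.map ((↑) : ℤ → ℂ)).charpoly.roots, ‖z‖ ≤ d)
    (hQN : N ≤ (Q.eval (d : ℂ)).re)
    (s : ℕ)
    (hs : s = Multiset.card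
      ((M.map ((↑) : ℤ → ℂ)).charpoly.roots.filter (fun z => 0 < z.im))) :
    N ^ ((1 : ℝ) / ((r : ℝ) - 1)) * (1 - ((s : ℝ) + 1) / r) ^ (1 - (s : ℝ) / ((r : ℝ) - 1))
      ≤ d := by
  classical
  set A := M.map ((↑) : ℤ → ℂ) with hAdef
  have hmon : A.charpoly.Monic := A.charpoly_monic
  have hdeg : A.charpoly.natDegree = r := by
    rw [Matrix.charpoly_natDegree_eq_dim]; exact Fintype.card_fin r
  have hQmon : Q.Monic := by
    have h := hmon
    rw [hfac] at h
    exact (monic_X_sub_C (d:ℂ)).of_mul_monic_left h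
  have hQ0 : Q ≠ 0 := hQmon.ne_zero
  have hQdeg : Q.natDegree = r - 1 := by
    have h2 : A.charpoly.natDegree = (X - C (d:ℂ)).natDegree + Q.natDegree := by
      rw [hfac, natDegree_mul (X_sub_C_ne_zero _) hQ0]
    rw [hdeg, natDegree_X_sub_C] at h2
    omega
  have hroots : A.charpoly.roots = (d:ℂ) ::ₘ Q.roots := by
    rw [hfac, roots_mul (by rw [← hfac]; exact hmon.ne_zero), roots_X_sub_C,
      Multiset.singleton_add]
  -- conjugation invariance
  have hmapA : A.map (starRingEnd ℂ) = A := by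
    ext i j
    simp [hAdef, Matrix.map_apply]
  have hconjroots : A.charpoly.roots.map (starRingEnd ℂ) = A.charpoly.roots := by
    rw [← (IsAlgClosed.splits A.charpoly).roots_map (starRingEnd ℂ), ← Matrix.charpoly_map, hmapA]
  have hQconj : Q.roots.map (starRingEnd ℂ) = Q.roots := by
    have h := hconjroots
    rw [hroots, Multiset.map_cons] at h
    have hdc : (starRingEnd ℂ) (d:ℂ) = (d:ℂ) := by simp
    rw [hdc] at h
    exact (Multiset.cons_inj_right _).mp h
  set R := Q.roots with hRdef
  have hcardR : Multiset.card R = r - 1 := by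
    rw [hRdef, splits_iff_card_roots.mp (IsAlgClosed.splits Q), hQdeg]
  set Rr := R.filter (fun z => z.im = 0) with hRr
  set Rp := R.filter (fun z => 0 < z.im) with hRp
  set Rn := R.filter (fun z => z.im < 0) with hRn
  have hsplitR : Rr + Rp + Rn = R := by
    refine Multiset.ext.mpr fun z => ?_
    simp only [Multiset.count_add, hRr, hRp, hRn, Multiset.count_filter]
    rcases lt_trichotomy z.im 0 with h | h | h
    · simp [h, h.ne, asymm h]
    · simp [h]
    · simp [h, h.ne', asymm h]
  have hRnconj : Rn = Rp.map (starRingEnd ℂ) := by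
    have h1 : Rn = (R.map (starRingEnd ℂ)).filter (fun z => z.im < 0) := by rw [hQconj]
    rw [h1, Multiset.filter_map]
    congr 1
    refine Multiset.filter_congr fun z _ => ?_
    simp [Function.comp]
  have hsRp : s = Multiset.card Rp := by
    rw [hs, hroots, Multiset.filter_cons_of_neg _ (by simp)]
  have hcards : Multiset.card Rr + 2 * s = r - 1 := by
    have h1 : Multiset.card Rn = s := by rw [hRnconj, Multiset.card_map, hsRp]
    have h2 := congrArg Multiset.card hsplitR
    simp only [Multiset.card_add] at h2
    omega
  -- eigenvalue bound for roots of Q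
  have hmemR : ∀ a ∈ R, ‖a‖ ≤ d := fun a ha =>
    hmax a (by rw [hroots]; exact Multiset.mem_cons_of_mem ha)
  have hreR : ∀ a ∈ R, a.re ≤ d := fun a ha =>
    le_trans (Complex.re_le_norm a) (hmemR a ha)
  -- |Q(d)| as a product
  set f : ℂ → ℝ := fun a => ‖(d:ℂ) - a‖ with hf
  have hQeval : Q.eval (d:ℂ) = (R.map (fun a => (d:ℂ) - a)).prod := by
    conv_lhs => rw [(IsAlgClosed.splits Q).eq_prod_roots_of_monic hQmon]
    rw [eval_multiset_prod, Multiset.map_map]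
    congr 1
    refine Multiset.map_congr rfl fun a _ => by simp
  have habs : ‖Q.eval (d:ℂ)‖ = (R.map f).prod := by
    rw [hQeval]; refine (map_multiset_prod (normHom.toMonoidHom : ℂ →* ℝ) _).trans ?_; rw [Multiset.map_map]
    rfl
  have hNP : N ≤ (R.map f).prod := by
    rw [← habs]
    exact le_trans hQN (Complex.re_le_norm _)
  -- nonnegativity of f-products
  have hfprod_nonneg : ∀ (S : Multiset ℂ), 0 ≤ (S.map f).prod := by
    intro S
    refine mprod_nonneg _ fun b hb => ?_
    obtain ⟨c, _, rfl⟩ := Multiset.mem_map.mp hb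
    exact norm_nonneg _
  -- split the product
  have hPsplit : (R.map f).prod
      = (Rr.map f).prod * ((Rp.map f).prod * (Rn.map f).prod) := by
    rw [← hsplitR]
    simp only [Multiset.map_add, Multiset.prod_add, mul_assoc]
  have hRnprod : (Rn.map f).prod = (Rp.map f).prod := by
    rw [hRnconj, Multiset.map_map]
    congr 1
    refine Multiset.map_congr rfl fun a _ => ?_
    simp only [Function.comp_apply, hf]
    rw [show (d:ℂ) - (starRingEnd ℂ) a = (starRingEnd ℂ) ((d:ℂ) - a) by
      rw [map_sub, Complex.conj_ofReal], Complex.norm_conj]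
  -- real factors
  set Tr : Multiset ℝ := Rr.map (fun a => d - a.re) with hTr
  set Tp : Multiset ℝ := Rp.map (fun a => 2*d - 2*a.re) with hTp
  have hTreq : (Rr.map f).prod = Tr.prod := by
    rw [hTr]
    congr 1
    refine Multiset.map_congr rfl fun a ha => ?_
    have him : a.im = 0 := by
      rw [hRr] at ha
      exact (Multiset.mem_filter.mp ha).2
    have haR : a ∈ R := by
      rw [hRr] at ha
      exact (Multiset.mem_filter.mp ha).1
    have h1 : (d:ℂ) - a = ((d - a.re : ℝ) : ℂ) := by
      apply Complex.ext <;> simp [him]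
    rw [hf]
    show ‖(d:ℂ) - a‖ = d - a.re
    rw [h1, Complex.norm_real, Real.norm_eq_abs, abs_of_nonneg (by linarith [hreR a haR])]
  -- complex pair factors
  have hpair : (Rp.map f).prod * (Rp.map f).prod ≤ d ^ s * Tp.prod := by
    have h1 : (Rp.map f).prod * (Rp.map f).prod = (Rp.map (fun a => f a * f a)).prod := by
      rw [Multiset.prod_map_mul]
    have h2 : (Rp.map (fun a => f a * f a)).prod
        ≤ (Rp.map (fun a => d * (2*d - 2*a.re))).prod := by
      refine mprod_le_mprod _ _ _ (fun a _ => mul_nonneg (norm_nonneg _)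
        (norm_nonneg _)) (fun a ha => ?_)
      have haR : a ∈ R := by
        rw [hRp] at ha
        exact (Multiset.mem_filter.mp ha).1
      have habs2 : a.re * a.re + a.im * a.im ≤ d ^ 2 := by
        have h := pow_le_pow_left₀ (norm_nonneg _) (hmemR a haR) 2
        rwa [Complex.sq_norm, Complex.normSq_apply] at h
      have hsq : f a * f a = (d - a.re) * (d - a.re) + a.im * a.im := by
        show ‖(d:ℂ) - a‖ * ‖(d:ℂ) - a‖ = _
        rw [← sq, Complex.sq_norm, Complex.normSq_apply]
        simp only [Complex.sub_re, Complex.sub_im, Complex.ofReal_re, Complex.ofReal_im]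
        ring
      rw [hsq]
      nlinarith [habs2]
    have h3 : (Rp.map (fun a => d * (2*d - 2*a.re))).prod = d ^ s * Tp.prod := by
      rw [hTp, mprod_map_const_mul, hsRp]
    rw [h1, ← h3]
    exact h2
  -- combine products
  have hTr_nonneg : ∀ t ∈ Tr, (0:ℝ) ≤ t := by
    intro t ht
    obtain ⟨a, ha, rfl⟩ := Multiset.mem_map.mp ht
    have haR : a ∈ R := by
      rw [hRr] at ha
      exact (Multiset.mem_filter.mp ha).1
    linarith [hreR a haR]
  have hTp_nonneg : ∀ t ∈ Tp, (0:ℝ) ≤ t := by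
    intro t ht
    obtain ⟨a, ha, rfl⟩ := Multiset.mem_map.mp ht
    have haR : a ∈ R := by
      rw [hRp] at ha
      exact (Multiset.mem_filter.mp ha).1
    linarith [hreR a haR]
  set T : Multiset ℝ := Tr + Tp with hT
  have hT_nonneg : ∀ t ∈ T, (0:ℝ) ≤ t := by
    intro t ht
    rcases Multiset.mem_add.mp ht with h | h
    · exact hTr_nonneg t h
    · exact hTp_nonneg t h
  have hNT : N ≤ d ^ s * T.prod := by
    have h1 : (R.map f).prod ≤ Tr.prod * (d ^ s * Tp.prod) := by
      rw [hPsplit, hTreq, hRnprod]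
      exact mul_le_mul_of_nonneg_left hpair (mprod_nonneg Tr hTr_nonneg)
    have h2 : Tr.prod * (d ^ s * Tp.prod) = d ^ s * T.prod := by
      rw [hT, Multiset.prod_add]
      ring
    calc N ≤ (R.map f).prod := hNP
      _ ≤ Tr.prod * (d ^ s * Tp.prod) := h1
      _ = d ^ s * T.prod := h2
  -- trace nonnegativity
  have htrace : A.trace = A.charpoly.roots.sum := Matrix.trace_eq_sum_roots_charpoly A
  have htr_nonneg : 0 ≤ A.trace.re := by
    rw [Matrix.trace, Complex.re_sum]
    refine Finset.sum_nonneg fun i _ => ?_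
    simp only [hAdef, Matrix.diag_apply, Matrix.map_apply, Complex.intCast_re]
    exact_mod_cast hM i i
  have hRsumre : (R.map Complex.re).sum = A.trace.re - d := by
    have h1 : A.trace = (d:ℂ) + R.sum := by rw [htrace, hroots, Multiset.sum_cons]
    rw [msum_re]
    have h2 := congrArg Complex.re h1
    simp only [Complex.add_re, Complex.ofReal_re] at h2
    linarith
  have hsum_split : (R.map Complex.re).sum
      = (Rr.map Complex.re).sum + ((Rp.map Complex.re).sum + (Rn.map Complex.re).sum) := by
    rw [← hsplitR]
    simp [Multiset.map_add, Multiset.sum_add, add_assoc]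
  have hRnsum : (Rn.map Complex.re).sum = (Rp.map Complex.re).sum := by
    rw [hRnconj, Multiset.map_map]
    exact congrArg Multiset.sum (Multiset.map_congr rfl fun a _ => by simp)
  have hkey_sum : (Rr.map Complex.re).sum + 2 * (Rp.map Complex.re).sum = A.trace.re - d := by
    rw [hRnsum] at hsum_split
    rw [← hRsumre, hsum_split]
    ring
  -- sum of T
  have hTrsum : Tr.sum = (Multiset.card Rr : ℝ) * d - (Rr.map Complex.re).sum := by
    rw [hTr]
    have h := msum_lin Rr d 1
    simpa using h
  have hTpsum : Tp.sum = (Multiset.card Rp : ℝ) * (2*d) - 2 * (Rp.map Complex.re).sum :=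
    msum_lin Rp (2*d) 2
  set m := Multiset.card Rr + s with hm
  have hm1 : 1 ≤ m := by omega
  have hcardT : Multiset.card T = m := by
    rw [hT, Multiset.card_add, hTr, hTp, Multiset.card_map, Multiset.card_map, hm, hsRp]
  have hmcast : (m:ℝ) = (r:ℝ) - 1 - s := by
    have h : m + s + 1 = r := by omega
    push_cast [← h]
    ring
  have hr2 : (2:ℝ) ≤ (r:ℝ) := by exact_mod_cast hr
  have hmpos : (0:ℝ) < m := by exact_mod_cast hm1
  have hTsum : T.sum ≤ d * r := by
    have h1 : T.sum = Tr.sum + Tp.sum := by rw [hT, Multiset.sum_add]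
    have hcast : (Multiset.card Rr : ℝ) + 2 * s = (r : ℝ) - 1 := by
      have h : Multiset.card Rr + 2*s + 1 = r := by omega
      push_cast [← h]
      ring
    rw [h1, hTrsum, hTpsum, ← hsRp]
    nlinarith [htr_nonneg, hkey_sum, hd]
  have hTsum_nonneg : (0:ℝ) ≤ T.sum := by
    refine Multiset.sum_nonneg ?_
    exact hT_nonneg
  -- AM-GM
  have hamgm := multiset_amgm T hT_nonneg (by rw [hcardT]; omega)
  rw [hcardT] at hamgm
  have hstep : T.prod ≤ (d * r / m) ^ m := by
    refine le_trans hamgm (pow_le_pow_left₀ (div_nonneg hTsum_nonneg hmpos.le) ?_ m)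
    exact (div_le_div_iff_of_pos_right hmpos).mpr hTsum
  -- key inequality  N * (m/r)^m ≤ d^(s+m)
  have hkey : N * ((m:ℝ)/r) ^ m ≤ d ^ (s + m) := by
    have h1 : N ≤ d ^ s * (d * r / m)^m := by
      refine le_trans hNT ?_
      exact mul_le_mul_of_nonneg_left hstep (pow_nonneg hd.le s)
    have h2 : (d * r / m)^m * ((m:ℝ)/r)^m = d ^ m := by
      rw [← mul_pow]
      congr 1
      field_simp
    calc N * ((m:ℝ)/r)^m ≤ (d^s * (d*r/m)^m) * (((m:ℝ)/r)^m) := by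
          refine mul_le_mul_of_nonneg_right h1 (pow_nonneg ?_ m)
          positivity
      _ = d^s * d^m := by rw [mul_assoc, h2]
      _ = d^(s+m) := (pow_add d s m).symm
  -- final numerics
  set c := (r:ℝ) - 1 with hcdef
  have hcpos : (0:ℝ) < c := by rw [hcdef]; linarith
  have hb1 : 1 - ((s:ℝ)+1)/r = (m:ℝ)/r := by
    rw [hmcast, hcdef]
    field_simp
    ring
  have hb2 : 1 - (s:ℝ)/((r:ℝ)-1) = (m:ℝ)/c := by
    rw [hmcast, hcdef]
    field_simp
    rw [sub_div, div_self (show (r:ℝ) - 1 ≠ 0 by linarith)]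
  rw [hb1, hb2]
  have hmr_pos : (0:ℝ) < (m:ℝ)/r := by positivity
  have hL : N ^ ((1:ℝ)/c) * ((m:ℝ)/r) ^ ((m:ℝ)/c) = (N * ((m:ℝ)/r)^m) ^ ((1:ℝ)/c) := by
    rw [Real.mul_rpow hN.le (by positivity)]
    congr 1
    rw [← Real.rpow_natCast ((m:ℝ)/r) m, ← Real.rpow_mul hmr_pos.le]
    congr 1
    rw [mul_one_div]
  rw [hL]
  have hfin : (N * ((m:ℝ)/r)^m) ^ ((1:ℝ)/c) ≤ (d ^ (s+m)) ^ ((1:ℝ)/c) := by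
    refine Real.rpow_le_rpow ?_ hkey (by positivity)
    exact mul_nonneg hN.le (pow_nonneg hmr_pos.le m)
  refine le_trans hfin ?_
  have h5 : ((s+m : ℕ):ℝ) = c := by
    push_cast
    rw [hmcast, hcdef]
    ring
  rw [← Real.rpow_natCast d (s+m), ← Real.rpow_mul hd.le, h5, mul_one_div,
    div_self (ne_of_gt hcpos), Real.rpow_one]
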